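/- Differentiation of the smoothing kernel operator in the scale variable: let φ : ℝ → ℝ be a Schwartz function, let g : ℝ → ℝ be bounded and measurable, and let z ∈ ℝ. Then the function r ↦ K_r g(z) = ∫_ℝ (1/r) φ(t/r) g(z − t) dt is differentiable on (0, ∞), and for every r > 0, d/dr K_r g(z) = −(1/r) ∫_ℝ (1/r) ψ(t/r) g(z − t) dt, where ψ(x) = φ(x) + x φ'(x) is the derivative of x ↦ x φ(x). -/

import Mathlib

open MeasureTheory SchwartzMap

/-- Differentiation of the smoothing kernel operator in the scale variable: for a Schwartz
kernel `φ` and a bounded measurable `g`, `r ↦ K_r g(z)` is differentiable on `(0, ∞)` with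
`d/dr K_r g(z) = −(1/r) ∫ (1/r) ψ(t/r) g(z − t) dt`, where `ψ(x) = φ(x) + x φ'(x)`. -/
theorem smoothing_kernel_deriv_r (φ : SchwartzMap ℝ ℝ) (g : ℝ → ℝ)
    (hgm : Measurable g) (C : ℝ) (hgb : ∀ x : ℝ, |g x| ≤ C)
    (z : ℝ) (r : ℝ) (hr : 0 < r) :
    HasDerivAt (fun ρ : ℝ => ∫ t : ℝ, (1 / ρ) * φ (t / ρ) * g (z - t))
      (-(1 / r) * ∫ t : ℝ, (1 / r) * (φ (t / r) + (t / r) * deriv (⇑φ) (t / r)) * g (z - t))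
      r := by
  have hC : 0 ≤ C := le_trans (abs_nonneg _) (hgb 0)
  -- ψ bounds
  obtain ⟨A₀, hA₀pos, hA₀⟩ := φ.decay 0 0
  obtain ⟨A₂, hA₂pos, hA₂⟩ := φ.decay 2 0
  obtain ⟨B₁, hB₁pos, hB₁⟩ := (SchwartzMap.derivCLM ℝ ℝ φ).decay 1 0
  obtain ⟨B₃, hB₃pos, hB₃⟩ := (SchwartzMap.derivCLM ℝ ℝ φ).decay 3 0
  simp only [norm_iteratedFDeriv_zero, SchwartzMap.derivCLM_apply, Real.norm_eq_abs,
    pow_zero, pow_one, one_mul] at hA₀ hA₂ hB₁ hB₃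
  set M : ℝ := A₀ + A₂ + B₁ + B₃ with hM
  have hMpos : 0 < M := by positivity
  have hψ : ∀ x : ℝ, |φ x + x * deriv (⇑φ) x| ≤ M / (1 + x ^ 2) := by
    intro x
    rw [le_div_iff₀ (by positivity), mul_comm]
    have habs : |φ x + x * deriv (⇑φ) x| ≤ |φ x| + |x| * |deriv (⇑φ) x| :=
      (abs_add_le _ _).trans (by rw [abs_mul])
    nlinarith [hA₀ x, hA₂ x, hB₁ x, hB₃ x, sq_abs x, abs_nonneg x,
      abs_nonneg (φ x), abs_nonneg (deriv (⇑φ) x), sq_nonneg x,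
      mul_le_mul_of_nonneg_left habs (by positivity : (0:ℝ) ≤ 1 + x ^ 2)]
  -- setup
  set F : ℝ → ℝ → ℝ := fun ρ t => (1 / ρ) * φ (t / ρ) * g (z - t) with hF
  set F' : ℝ → ℝ → ℝ := fun ρ t =>
    -(1 / ρ ^ 2) * (φ (t / ρ) + (t / ρ) * deriv (⇑φ) (t / ρ)) * g (z - t) with hF'
  have hmeasφ : ∀ ρ : ℝ, Measurable fun t : ℝ => (φ (t / ρ) : ℝ) :=
    fun ρ => φ.continuous.measurable.comp (measurable_id.div_const ρ)
  have hmeasψ : ∀ ρ : ℝ, Measurable fun t : ℝ => (deriv (⇑φ) (t / ρ) : ℝ) :=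
    fun ρ => (SchwartzMap.derivCLM ℝ ℝ φ).continuous.measurable.comp (measurable_id.div_const ρ)
  have hmeasg : Measurable fun t : ℝ => g (z - t) :=
    hgm.comp (measurable_const.sub measurable_id)
  set c : ℝ := 2 / (3 * r) with hc
  have hcpos : 0 < c := by positivity
  set bound : ℝ → ℝ := fun t => (4 / r ^ 2) * C * (M * (1 + (c * t) ^ 2)⁻¹) with hbound
  have key := hasDerivAt_integral_of_dominated_loc_of_deriv_le (F := F) (F' := F')
    (μ := volume) (x₀ := r) (bound := bound) (Metric.ball_mem_nhds r (half_pos hr))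
    (Filter.Eventually.of_forall fun ρ =>
      (((measurable_const.mul (hmeasφ ρ)).mul hmeasg).aestronglyMeasurable))
    ?hFint
    (((measurable_const.mul ((hmeasφ r).add ((measurable_id.div_const r).mul
      (hmeasψ r)))).mul hmeasg).aestronglyMeasurable)
    ?hbd ?hbint ?hdiff
  · have heq : (-(1 / r) * ∫ t : ℝ, (1 / r) * (φ (t / r) + (t / r) * deriv (⇑φ) (t / r)) * g (z - t))
        = ∫ t : ℝ, F' r t := by
      rw [← integral_const_mul]
      congr 1; funext t; rw [hF']; ring
    rw [heq]
    exact key.2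
  case hFint =>
    have hint : Integrable (fun t : ℝ => (φ (t / r) : ℝ)) := φ.integrable.comp_div hr.ne'
    apply Integrable.mono' ((hint.const_mul ((1/r) * C)).abs)
    · exact ((measurable_const.mul (hmeasφ r)).mul hmeasg).aestronglyMeasurable
    · filter_upwards with t
      rw [hF]
      simp only [Real.norm_eq_abs, abs_mul, abs_abs]
      rw [abs_of_nonneg (by positivity : (0:ℝ) ≤ 1/r)]
      calc 1/r * |φ (t/r)| * |g (z-t)| ≤ 1/r * |φ (t/r)| * C := by
            apply mul_le_mul_of_nonneg_left (hgb _); positivity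
        _ = |1/r * C * φ (t/r)| := by
            rw [abs_mul, abs_mul, abs_of_nonneg (by positivity : (0:ℝ) ≤ 1/r),
              abs_of_nonneg hC]; ring
        _ ≤ 1 / r * |C| * |φ (t / r)| := le_of_eq (by
            rw [abs_mul, abs_mul, abs_of_nonneg (by positivity : (0:ℝ) ≤ 1/r)])
  case hbd =>
    filter_upwards with t ρ hρ
    simp only [Metric.mem_ball, Real.dist_eq] at hρ
    have hρ1 : r / 2 < ρ := by cases abs_lt.mp hρ; linarith
    have hρ2 : ρ < 3 * r / 2 := by cases abs_lt.mp hρ; linarith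
    have hρpos : 0 < ρ := lt_trans (half_pos hr) hρ1
    rw [hF', hbound]
    simp only [Real.norm_eq_abs, abs_mul, abs_neg]
    have h1 : |1 / ρ ^ 2| ≤ 4 / r ^ 2 := by
      rw [abs_of_nonneg (by positivity)]
      rw [div_le_div_iff₀ (by positivity) (by positivity)]
      nlinarith
    have h2 : |φ (t/ρ) + (t/ρ) * deriv (⇑φ) (t/ρ)| ≤ M * (1 + (c*t)^2)⁻¹ := by
      refine (hψ _).trans ?_
      rw [div_eq_mul_inv]
      apply mul_le_mul_of_nonneg_left _ hMpos.le
      apply inv_anti₀ (by positivity)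
      have : (c*t)^2 ≤ (t/ρ)^2 := by
        rw [div_pow, mul_pow, le_div_iff₀ (by positivity)]
        have hcρ : c * ρ ≤ 1 := by
          rw [hc, div_mul_eq_mul_div, div_le_one (by positivity)]; nlinarith
        calc c^2 * t^2 * ρ^2 = t^2 * ((c*ρ)^2) := by ring
          _ ≤ t^2 * 1 := by
              apply mul_le_mul_of_nonneg_left _ (sq_nonneg t)
              nlinarith [mul_pos hcpos hρpos]
          _ = t^2 := mul_one _
      linarith
    calc |1/ρ^2| * |φ (t/ρ) + (t/ρ) * deriv (⇑φ) (t/ρ)| * |g (z-t)|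
        ≤ (4/r^2) * (M * (1 + (c*t)^2)⁻¹) * C := by
          apply mul_le_mul (mul_le_mul h1 h2 (abs_nonneg _) (by positivity)) (hgb _)
            (abs_nonneg _) (by positivity)
      _ = 4/r^2 * C * (M * (1 + (c*t)^2)⁻¹) := by ring
  case hbint =>
    have : Integrable (fun t : ℝ => ((1 + (c*t)^2)⁻¹ : ℝ)) :=
      integrable_inv_one_add_sq.comp_mul_left' hcpos.ne'
    exact (this.const_mul M).const_mul _
  case hdiff =>
    filter_upwards with t ρ hρ
    simp only [Metric.mem_ball, Real.dist_eq] at hρ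
    have hρ1 : r / 2 < ρ := by cases abs_lt.mp hρ; linarith
    have hρpos : 0 < ρ := lt_trans (half_pos hr) hρ1
    have hinv : HasDerivAt (fun ρ : ℝ => 1 / ρ) (-(1 / ρ ^ 2)) ρ := by
      simpa using (hasDerivAt_inv hρpos.ne').congr_deriv (by field_simp)
    have hdiv : HasDerivAt (fun ρ : ℝ => t / ρ) (-(t / ρ ^ 2)) ρ := by
      have := hinv.const_mul t
      simpa [mul_comm, mul_div_assoc, div_eq_mul_inv] using this.congr_deriv (by ring)
    have hφ : HasDerivAt (fun ρ : ℝ => (φ (t / ρ) : ℝ))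
        (deriv (⇑φ) (t / ρ) * (-(t / ρ ^ 2))) ρ := by
      have hd : HasDerivAt (⇑φ) (deriv (⇑φ) (t / ρ)) (t / ρ) :=
        φ.differentiableAt.hasDerivAt
      exact hd.comp ρ hdiv
    have := (hinv.mul hφ).mul_const (g (z - t))
    refine this.congr_deriv ?_
    rw [hF']
    field_simp
    ring
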